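/- The mutual information of the isotropic state is exponentially small in the fidelity: for every integer d ≥ 2 and every F ∈ [0,1], the quantity I(F,d) = 2·log d − S(F,d) satisfies I(F,d) ≤ 2F·log d + (1−F)/(d²−1). -/

import Mathlib

/-- The mutual information of the isotropic state is exponentially small in the fidelity:
`I(F,d) = 2·log d − S(F,d) ≤ 2F·log d + (1−F)/(d²−1)`, where
`S(F,d) = −F·log F − (1−F)·log((1−F)/(d²−1))` is the von Neumann entropy of the
isotropic state (with the convention `0·log 0 = 0`, automatic since `Real.log 0 = 0`). -/
theorem isoState_mutualInfo_upper_bound (d : ℕ) (hd : 2 ≤ d) (F : ℝ)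
    (hF : F ∈ Set.Icc (0 : ℝ) 1) :
    2 * Real.log d -
        (-F * Real.log F - (1 - F) * Real.log ((1 - F) / ((d : ℝ) ^ 2 - 1))) ≤
      2 * F * Real.log d + (1 - F) / ((d : ℝ) ^ 2 - 1) := by
  obtain ⟨hF0, hF1⟩ := hF
  have hd' : (2:ℝ) ≤ (d:ℝ) := by exact_mod_cast hd
  set D : ℝ := (d : ℝ) ^ 2 - 1 with hDdef
  have hD3 : (3:ℝ) ≤ D := by nlinarith
  have hDpos : (0:ℝ) < D := by linarith
  rcases eq_or_lt_of_le hF1 with h1 | h1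
  · subst h1
    norm_num
  · have h1F : 0 < 1 - F := by linarith
    have hlog2 : 2 * Real.log d = Real.log (D + 1) := by
      have h : D + 1 = (d:ℝ)^2 := by ring
      rw [h, Real.log_pow]
      norm_num
    have hkey : Real.log (D + 1) - Real.log D ≤ 1 / D := by
      rw [← Real.log_div (by linarith) (ne_of_gt hDpos)]
      have hpos : 0 < (D + 1) / D := by positivity
      have := Real.log_le_sub_one_of_pos hpos
      have heq : (D + 1) / D - 1 = 1 / D := by field_simp; ring
      linarith [heq ▸ this]
    have hFlog : F * Real.log F ≤ 0 :=
      mul_nonpos_of_nonneg_of_nonpos hF0 (Real.log_nonpos hF0 hF1)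
    have hGlog : (1 - F) * Real.log (1 - F) ≤ 0 :=
      mul_nonpos_of_nonneg_of_nonpos (by linarith)
        (Real.log_nonpos (by linarith) (by linarith))
    have h4 : (1 - F) * (Real.log (D + 1) - Real.log D) ≤ (1 - F) / D := by
      have := mul_le_mul_of_nonneg_left hkey (le_of_lt h1F)
      calc (1 - F) * (Real.log (D + 1) - Real.log D) ≤ (1 - F) * (1 / D) := this
        _ = (1 - F) / D := by ring
    rw [← hlog2] at h4
    rw [Real.log_div (by linarith) (ne_of_gt hDpos)]
    nlinarith [h4, hFlog, hGlog]
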